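/- Let X be a finite probability space with measure μ and let F be a finite family of functions X → ℝ that is Laplace pseudorandom, i.e., for all real coefficients (λ_φ), log E_μ exp(Σ_{φ∈F} λ_φ φ) ≤ (1/2) Σ_{φ∈F} λ_φ². Then for every density f ∈ Δ_X, Σ_{φ∈F} ⟨f, φ⟩² ≤ 2 Ent_μ(f). -/

import Mathlib

open Finset Real

lemma young_ineq (a b : ℝ) (ha : 0 ≤ a) :
    a * b ≤ a * Real.log a - a + Real.exp b := by
  rcases ha.eq_or_lt with h | h
  · rw [← h]
    simp
    positivity
  · have h1 : b - Real.log a + 1 ≤ Real.exp (b - Real.log a) :=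
      Real.add_one_le_exp _
    have h2 : a * Real.exp (b - Real.log a) = Real.exp b := by
      rw [Real.exp_sub, Real.exp_log h]
      field_simp
    nlinarith [mul_le_mul_of_nonneg_left h1 h.le]

/-- If a finite family `F` of observables on a finite probability space `(X, μ)`
is Laplace pseudorandom, then for every density `f`,
`Σ_{φ ∈ F} ⟨f, φ⟩² ≤ 2 Ent_μ(f)`. -/
theorem laplace_pseudorandom_spectrum_bound {X ι : Type*} [Fintype X] (μ : X → ℝ)
    (hμ0 : ∀ x, 0 ≤ μ x) (hμ1 : ∑ x, μ x = 1)
    (F : Finset ι) (φ : ι → X → ℝ)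
    (hLaplace : ∀ lam : ι → ℝ,
      Real.log (∑ x, μ x * Real.exp (∑ i ∈ F, lam i * φ i x))
        ≤ (1 / 2) * ∑ i ∈ F, (lam i) ^ 2)
    (f : X → ℝ) (hf0 : ∀ x, 0 ≤ f x) (hf1 : ∑ x, μ x * f x = 1) :
    ∑ i ∈ F, (∑ x, μ x * (f x * φ i x)) ^ 2
      ≤ 2 * ∑ x, μ x * (f x * Real.log (f x)) := by
  set c : ι → ℝ := fun i => ∑ x, μ x * (f x * φ i x) with hc
  set S : X → ℝ := fun x => ∑ i ∈ F, c i * φ i x with hS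
  set Z : ℝ := ∑ x, μ x * Real.exp (S x) with hZ
  have hZpos : 0 < Z := by
    obtain ⟨x0, hx0⟩ : ∃ x, 0 < μ x := by
      by_contra hcon
      push_neg at hcon
      have : ∑ x, μ x = 0 :=
        Finset.sum_eq_zero fun x _ => le_antisymm (hcon x) (hμ0 x)
      linarith
    apply Finset.sum_pos' (fun x _ => mul_nonneg (hμ0 x) (Real.exp_pos _).le)
    exact ⟨x0, Finset.mem_univ x0, mul_pos hx0 (Real.exp_pos _)⟩
  have key : ∀ x, μ x * (f x * (S x - Real.log Z)) ≤
      μ x * (f x * Real.log (f x) - f x + Real.exp (S x - Real.log Z)) :=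
    fun x => mul_le_mul_of_nonneg_left (young_ineq (f x) _ (hf0 x)) (hμ0 x)
  have hsum : ∑ x, μ x * (f x * (S x - Real.log Z)) ≤
      ∑ x, μ x * (f x * Real.log (f x) - f x + Real.exp (S x - Real.log Z)) :=
    Finset.sum_le_sum fun x _ => key x
  -- left-hand side
  have h1 : ∑ x, μ x * (f x * S x) = ∑ i ∈ F, c i ^ 2 := by
    have : ∀ x, μ x * (f x * S x) = ∑ i ∈ F, c i * (μ x * (f x * φ i x)) := by
      intro x
      rw [hS, Finset.mul_sum, Finset.mul_sum]
      exact Finset.sum_congr rfl fun i _ => by ring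
    rw [Finset.sum_congr rfl fun x _ => this x, Finset.sum_comm]
    refine Finset.sum_congr rfl fun i _ => ?_
    rw [← Finset.mul_sum]
    show c i * c i = c i ^ 2
    rw [sq]
  have hL : ∑ x, μ x * (f x * (S x - Real.log Z))
      = (∑ i ∈ F, c i ^ 2) - Real.log Z := by
    have : ∀ x, μ x * (f x * (S x - Real.log Z))
        = μ x * (f x * S x) - Real.log Z * (μ x * f x) := fun x => by ring
    rw [Finset.sum_congr rfl fun x _ => this x, Finset.sum_sub_distrib,
      ← Finset.mul_sum, hf1, h1, mul_one]
  -- right-hand side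
  have hR : ∑ x, μ x * (f x * Real.log (f x) - f x + Real.exp (S x - Real.log Z))
      = ∑ x, μ x * (f x * Real.log (f x)) := by
    have : ∀ x, μ x * (f x * Real.log (f x) - f x + Real.exp (S x - Real.log Z))
        = μ x * (f x * Real.log (f x)) - μ x * f x
            + (μ x * Real.exp (S x)) * (1 / Z) := by
      intro x
      rw [Real.exp_sub, Real.exp_log hZpos]
      ring
    rw [Finset.sum_congr rfl fun x _ => this x, Finset.sum_add_distrib,
      Finset.sum_sub_distrib, ← Finset.sum_mul, ← hZ, hf1]
    field_simp
    ring
  have hLog : Real.log Z ≤ (1 / 2) * ∑ i ∈ F, c i ^ 2 := hLaplace c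
  have hgoal : ∑ i ∈ F, (∑ x, μ x * (f x * φ i x)) ^ 2 = ∑ i ∈ F, c i ^ 2 := rfl
  rw [hgoal]
  rw [hL, hR] at hsum
  linarith
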